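/- Suppose the induced endogenous distribution Q is strictly positive. Then for every x ∈ Π_i X_i one has Q(x) = Π_{e∈E} Π_{k=1}^{m_e} Q(x_{i_k} = x_{i_k} ∣ T_k^e = x↾T_k^e), where for each e ∈ E and 1 ≤ k ≤ m_e, T_k^e := {i_1,…,i_{k−1}} ∪ pa(i_1) ∪ … ∪ pa(i_k). (The endogenous distribution of a quasi-Markovian model factorizes over the confounded components determined by the exogenous variables.) -/

import Mathlib

open Finset
open scoped Classical

variable {n : ℕ}

/-- Restriction of a joint endogenous configuration `x` to the coordinates in `S`. -/
def restr {X : Fin n → Type} (S : Finset (Fin n)) (x : ∀ i, X i) : ∀ j : S, X j :=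
  fun j => x j

/-- Marginal of `R` over the coordinates in `S`. -/
noncomputable def marg {X : Fin n → Type} [∀ i, Fintype (X i)]
    (R : (∀ i, X i) → ℝ) (S : Finset (Fin n)) (v : ∀ j : S, X j) : ℝ :=
  ∑ x : ∀ i, X i, if restr S x = v then R x else 0

/-- Conditional probability `R(x_i = a | S = v)`. -/
noncomputable def cpr {X : Fin n → Type} [∀ i, Fintype (X i)]
    (R : (∀ i, X i) → ℝ) (i : Fin n) (S : Finset (Fin n)) (a : X i) (v : ∀ j : S, X j) : ℝ :=
  (∑ x : ∀ i, X i, if x i = a ∧ restr S x = v then R x else 0) / marg R S v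

/-- Restriction along an inclusion of index sets. -/
def restr2 {X : Fin n → Type} {S T : Finset (Fin n)} (h : S ⊆ T) (v : ∀ j : T, X j) :
    ∀ j : S, X j :=
  fun j => v ⟨j, h j.2⟩

/-- The endogenous children of the exogenous variable `e`. -/
noncomputable def childSet {E : Type} [Fintype E] (c : Fin n → E) (e : E) : Finset (Fin n) :=
  univ.filter (fun i => c i = e)

/-- Enumeration `i_1 < … < i_{m_e}` of the children of `e` in increasing order. -/
noncomputable def ch {E : Type} [Fintype E] (c : Fin n → E) (e : E) :
    Fin (childSet c e).card → Fin n :=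
  fun k => (childSet c e).orderEmbOfFin rfl k

lemma ch_mem_childSet {E : Type} [Fintype E] (c : Fin n → E) (e : E)
    (k : Fin (childSet c e).card) : ch c e k ∈ childSet c e :=
  Finset.orderEmbOfFin_mem _ rfl k

lemma c_ch {E : Type} [Fintype E] (c : Fin n → E) (e : E)
    (k : Fin (childSet c e).card) : c (ch c e k) = e := by
  have h := ch_mem_childSet c e k
  simpa [childSet] using h

/-- Cast of a state of `U e` to a state of the exogenous parent of the `k`-th child of `e`. -/
noncomputable def uCast {E : Type} [Fintype E] (U : E → Type) (c : Fin n → E) (e : E)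
    (k : Fin (childSet c e).card) (u : U e) : U (c (ch c e k)) :=
  cast (congrArg U (c_ch c e k).symm) u

/-- `W_e := {i_1,…,i_{m_e}} ∪ pa(i_1) ∪ … ∪ pa(i_{m_e})`. -/
noncomputable def Wset {E : Type} [Fintype E] (pa : Fin n → Finset (Fin n))
    (c : Fin n → E) (e : E) : Finset (Fin n) :=
  childSet c e ∪ (childSet c e).biUnion pa

/-- `T_k^e := {i_1,…,i_{k−1}} ∪ pa(i_1) ∪ … ∪ pa(i_k)` (indices `k` are 0-based here). -/
noncomputable def Tset {E : Type} [Fintype E] (pa : Fin n → Finset (Fin n))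
    (c : Fin n → E) (e : E) (k : Fin (childSet c e).card) : Finset (Fin n) :=
  ((univ.filter (fun l => l < k)).image (ch c e)) ∪
    ((univ.filter (fun l => l ≤ k)).biUnion (fun l => pa (ch c e l)))

lemma ch_mem_W {E : Type} [Fintype E] (pa : Fin n → Finset (Fin n)) (c : Fin n → E)
    (e : E) (k : Fin (childSet c e).card) : ch c e k ∈ Wset pa c e :=
  Finset.mem_union_left _ (ch_mem_childSet c e k)

lemma pa_subset_W {E : Type} [Fintype E] (pa : Fin n → Finset (Fin n)) (c : Fin n → E)
    (e : E) (k : Fin (childSet c e).card) : pa (ch c e k) ⊆ Wset pa c e :=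
  fun j hj => Finset.mem_union_right _
    (Finset.mem_biUnion.2 ⟨ch c e k, ch_mem_childSet c e k, hj⟩)

lemma T_subset_W {E : Type} [Fintype E] (pa : Fin n → Finset (Fin n)) (c : Fin n → E)
    (e : E) (k : Fin (childSet c e).card) : Tset pa c e k ⊆ Wset pa c e := by
  intro j hj
  rcases Finset.mem_union.1 hj with h | h
  · rcases Finset.mem_image.1 h with ⟨l, _, rfl⟩
    exact ch_mem_W pa c e l
  · rcases Finset.mem_biUnion.1 h with ⟨l, _, hl⟩
    exact pa_subset_W pa c e l hl

/-- Full joint `J(x,u)` of a quasi-Markovian PSCM. -/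
noncomputable def Jfun {E : Type} [Fintype E] {X : Fin n → Type} {U : E → Type}
    [∀ i, Fintype (X i)]
    (pa : Fin n → Finset (Fin n)) (c : Fin n → E)
    (f : ∀ i, U (c i) → (∀ j : pa i, X j) → X i)
    (q : ∀ e, U e → ℝ) (x : ∀ i, X i) (u : ∀ e, U e) : ℝ :=
  (∏ e, q e (u e)) *
    ∏ i, (if f i (u (c i)) (restr (pa i) x) = x i then (1 : ℝ) else 0)

/-- Induced endogenous distribution `Q(x) := Σ_u J(x,u)`. -/
noncomputable def Qfun {E : Type} [Fintype E] {X : Fin n → Type} {U : E → Type}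
    [∀ i, Fintype (X i)] [∀ e, Fintype (U e)]
    (pa : Fin n → Finset (Fin n)) (c : Fin n → E)
    (f : ∀ i, U (c i) → (∀ j : pa i, X j) → X i)
    (q : ∀ e, U e → ℝ) (x : ∀ i, X i) : ℝ :=
  ∑ u : ∀ e, U e, Jfun pa c f q x u

section Aux

variable {E : Type} [Fintype E] {X : Fin n → Type} {U : E → Type}
variable [∀ i, Fintype (X i)] [∀ e, Fintype (U e)]

/-- The prefix set `{j : j < m}`. -/
def preF (m : ℕ) : Finset (Fin n) := univ.filter (fun j => (j : ℕ) < m)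

/-- Marginal of `Q` over `S`, phrased with full configurations. -/
noncomputable def m2 (Q : (∀ i, X i) → ℝ) (S : Finset (Fin n)) (x : ∀ i, X i) : ℝ :=
  ∑ y : ∀ i, X i, if (∀ j ∈ S, y j = x j) then Q y else 0

lemma restr_eq_iff {S : Finset (Fin n)} {x y : ∀ i, X i} :
    restr S y = restr S x ↔ ∀ j ∈ S, y j = x j := by
  constructor
  · intro h j hj; exact congrFun h ⟨j, hj⟩
  · intro h; funext j; exact h j.1 j.2

lemma marg_eq (Q : (∀ i, X i) → ℝ) (S : Finset (Fin n)) (x : ∀ i, X i) :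
    marg Q S (restr S x) = m2 Q S x := by
  unfold marg m2
  refine Finset.sum_congr rfl fun y _ => ?_
  simp only [restr_eq_iff]

lemma cpr_eq (Q : (∀ i, X i) → ℝ) (i : Fin n) (S : Finset (Fin n)) (x : ∀ i, X i) :
    cpr Q i S (x i) (restr S x) = m2 Q (insert i S) x / m2 Q S x := by
  unfold cpr
  rw [marg_eq]
  congr 1
  unfold m2
  refine Finset.sum_congr rfl fun y _ => ?_
  refine if_congr ?_ rfl rfl
  rw [restr_eq_iff]
  constructor
  · rintro ⟨h1, h2⟩ j hj
    rcases Finset.mem_insert.1 hj with rfl | hj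
    · exact h1
    · exact h2 j hj
  · intro h
    exact ⟨h i (Finset.mem_insert_self i S), fun j hj => h j (Finset.mem_insert_of_mem hj)⟩

end Aux
section Model

variable {E : Type} [Fintype E] {X : Fin n → Type} {U : E → Type}
variable [∀ i, Fintype (X i)] [∀ e, Fintype (U e)]
variable (pa : Fin n → Finset (Fin n)) (c : Fin n → E)
variable (f : ∀ i, U (c i) → (∀ j : pa i, X j) → X i) (q : ∀ e, U e → ℝ)
variable (hpa : ∀ i, ∀ j ∈ pa i, j < i)

/-- The indicator of the structural equation at `j`. -/
noncomputable def indf (u : ∀ e, U e) (x : ∀ i, X i) (j : Fin n) : ℝ :=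
  if f j (u (c j)) (restr (pa j) x) = x j then 1 else 0

/-- Truncated joint mass. -/
noncomputable def Gv (m : ℕ) (x : ∀ i, X i) : ℝ :=
  ∑ u : ∀ e, U e, (∏ e, q e (u e)) *
    ∏ j : Fin n, (if (j : ℕ) < m then indf pa c f u x j else 1)

/-- The `e`-factor of the truncated joint mass. -/
noncomputable def Af (e : E) (m : ℕ) (x : ∀ i, X i) : ℝ :=
  ∑ w : U e, q e w * ∏ j : Fin n,
    (if h : c j = e ∧ (j : ℕ) < m then
      (if f j (cast (congrArg U h.1.symm) w) (restr (pa j) x) = x j then (1 : ℝ) else 0)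
    else 1)

lemma Gv_top (m : ℕ) (hm : n ≤ m) (x : ∀ i, X i) :
    Gv pa c f q m x = Qfun pa c f q x := by
  unfold Gv Qfun Jfun indf
  refine Finset.sum_congr rfl fun u _ => ?_
  congr 1
  refine Finset.prod_congr rfl fun j _ => ?_
  rw [if_pos (lt_of_lt_of_le j.isLt hm)]

lemma m2_univ (Q : (∀ i, X i) → ℝ) (x : ∀ i, X i) : m2 Q univ x = Q x := by
  unfold m2
  have : ∀ y : ∀ i, X i, (∀ j ∈ (univ : Finset (Fin n)), y j = x j) ↔ y = x := by
    intro y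
    constructor
    · intro h; funext j; exact h j (mem_univ j)
    · intro h j _; rw [h]
  simp only [this]
  simp

include hpa
/-- The prefix-marginal formula. -/
lemma m2_pre (m : ℕ) (x : ∀ i, X i) :
    m2 (Qfun pa c f q) (preF m) x = Gv pa c f q m x := by
  -- downward induction on m
  suffices H : ∀ d mm, n - mm ≤ d → ∀ x, m2 (Qfun pa c f q) (preF mm) x = Gv pa c f q mm x by
    exact H n m (by omega) x
  intro d
  induction d with
  | zero =>
    intro mm hmm x
    have hub : n ≤ mm := by omega
    have : preF (n := n) mm = univ := by
      apply Finset.eq_univ_iff_forall.2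
      intro j
      simp [preF, lt_of_lt_of_le j.isLt hub]
    rw [this, m2_univ, Gv_top pa c f q mm hub]
  | succ d ih =>
    intro mm hmm x
    by_cases hub : n ≤ mm
    · have : preF (n := n) mm = univ := by
        apply Finset.eq_univ_iff_forall.2
        intro j
        simp [preF, lt_of_lt_of_le j.isLt hub]
      rw [this, m2_univ, Gv_top pa c f q mm hub]
    · push_neg at hub
      set im : Fin n := ⟨mm, hub⟩ with him
      -- Claim A : m2 (preF mm) x = ∑ a, m2 (preF (mm+1)) (update x im a)
      have claimA : m2 (Qfun pa c f q) (preF mm) x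
          = ∑ a : X im, m2 (Qfun pa c f q) (preF (mm + 1)) (Function.update x im a) := by
        unfold m2
        rw [Finset.sum_comm]
        refine Finset.sum_congr rfl fun y _ => ?_
        have hcond : ∀ a : X im,
            (∀ j ∈ preF (mm + 1), y j = Function.update x im a j)
              ↔ (a = y im ∧ ∀ j ∈ preF mm, y j = x j) := by
          intro a
          constructor
          · intro h
            constructor
            · have := h im (by simp [preF, him])
              rw [Function.update_self] at this
              exact this.symm
            · intro j hj
              have hjm : (j : ℕ) < mm := by simpa [preF] using hj
              have hne : j ≠ im := by
                intro hh; rw [hh] at hjm; exact Nat.lt_irrefl mm hjm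
              have := h j (by simp [preF]; omega)
              rwa [Function.update_of_ne hne] at this
          · rintro ⟨ha, h⟩ j hj
            have hjm : (j : ℕ) < mm + 1 := by simpa [preF] using hj
            by_cases hje : j = im
            · subst hje; rw [Function.update_self, ha]
            · have hjlt : (j : ℕ) < mm := by
                have : (j : ℕ) ≠ mm := by
                  intro hh; exact hje (Fin.ext hh)
                omega
              rw [Function.update_of_ne hje]
              exact h j (by simp [preF, hjlt])
        have step1 : ∀ a : X im, (if (∀ j ∈ preF (mm+1), y j = Function.update x im a j)
                then Qfun pa c f q y else 0)
            = (if (a = y im ∧ ∀ j ∈ preF mm, y j = x j) then Qfun pa c f q y else 0) :=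
          fun a => if_congr (hcond a) rfl rfl
        simp only [step1]
        by_cases h2 : (∀ j ∈ preF mm, y j = x j)
        · rw [if_pos h2]
          have step2 : ∀ a : X im, (if (a = y im ∧ ∀ j ∈ preF mm, y j = x j)
                then Qfun pa c f q y else 0) = (if a = y im then Qfun pa c f q y else 0) :=
            fun a => if_congr ⟨fun h => h.1, fun h => ⟨h, h2⟩⟩ rfl rfl
          simp only [step2]
          simp
        · rw [if_neg h2]
          have step2 : ∀ a : X im, (if (a = y im ∧ ∀ j ∈ preF mm, y j = x j)
                then Qfun pa c f q y else 0) = 0 :=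
            fun a => if_neg (fun h => h2 h.2)
          simp only [step2]
          simp
      -- Claim B : ∑ a, Gv (mm+1) (update x im a) = Gv mm x
      have claimB : ∑ a : X im, Gv pa c f q (mm + 1) (Function.update x im a)
          = Gv pa c f q mm x := by
        unfold Gv
        rw [Finset.sum_comm]
        refine Finset.sum_congr rfl fun u _ => ?_
        rw [← Finset.mul_sum]
        congr 1
        -- ∑ a, ∏ j F(a,j) = ∏ j (if j<mm then ind else 1)
        have hsplit : ∀ a : X im,
            (∏ j : Fin n, (if (j : ℕ) < mm + 1 then indf pa c f u (Function.update x im a) j else 1))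
            = (if f im (u (c im)) (restr (pa im) x) = a then (1:ℝ) else 0) *
              ∏ j ∈ univ.erase im, (if (j : ℕ) < mm then indf pa c f u x j else 1) := by
          intro a
          rw [← Finset.mul_prod_erase univ _ (mem_univ im)]
          congr 1
          · rw [if_pos (Nat.lt_succ_self mm : (⟨mm, hub⟩ : Fin n).1 < mm + 1)]
            unfold indf
            have hres : restr (pa im) (Function.update x im a) = restr (pa im) x := by
              funext p
              have hp : p.1 < im := hpa im p.1 p.2
              exact Function.update_of_ne (ne_of_lt hp) _ _
            rw [hres, Function.update_self]
          · refine Finset.prod_congr rfl fun j hj => ?_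
            have hje : j ≠ im := (Finset.mem_erase.1 hj).1
            have hjne : (j : ℕ) ≠ mm := by
              intro hh; apply hje; apply Fin.ext; simp [him, hh]
            by_cases hjm : (j : ℕ) < mm
            · rw [if_pos (by omega), if_pos hjm]
              unfold indf
              have hres : restr (pa j) (Function.update x im a) = restr (pa j) x := by
                funext p
                have hp : (p.1 : ℕ) < mm := by
                  have := hpa j p.1 p.2
                  have : (p.1 : ℕ) < (j : ℕ) := this
                  omega
                have hpne : p.1 ≠ im := by
                  intro hh; rw [hh] at hp; exact Nat.lt_irrefl mm hp
                exact Function.update_of_ne hpne _ _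
              rw [hres, Function.update_of_ne hje]
            · rw [if_neg (by omega), if_neg hjm]
        simp only [hsplit]
        rw [← Finset.sum_mul]
        rw [Finset.sum_ite_eq (univ : Finset (X im)) (f im (u (c im)) (restr (pa im) x))
          (fun _ => (1:ℝ))]
        simp only [mem_univ, if_true, one_mul]
        symm
        rw [← Finset.prod_erase_mul univ _ (mem_univ im)]
        rw [if_neg (Nat.lt_irrefl mm : ¬ (⟨mm, hub⟩ : Fin n).1 < mm), mul_one]
      rw [claimA]
      calc ∑ a : X im, m2 (Qfun pa c f q) (preF (mm + 1)) (Function.update x im a)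
          = ∑ a : X im, Gv pa c f q (mm + 1) (Function.update x im a) := by
            refine Finset.sum_congr rfl fun a _ => ?_
            exact ih (mm + 1) (by omega) _
        _ = Gv pa c f q mm x := claimB

omit hpa

lemma Gv_factor (m : ℕ) (x : ∀ i, X i) :
    Gv pa c f q m x = ∏ e, Af pa c f q e m x := by
  unfold Af
  rw [Fintype.prod_sum (fun e w => q e w * ∏ j : Fin n,
    (if h : c j = e ∧ (j : ℕ) < m then
      (if f j (cast (congrArg U h.1.symm) w) (restr (pa j) x) = x j then (1 : ℝ) else 0)
    else 1))]
  unfold Gv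
  refine Finset.sum_congr rfl fun u _ => ?_
  rw [Finset.prod_mul_distrib]
  congr 1
  rw [Finset.prod_comm]
  refine Finset.prod_congr rfl fun j _ => ?_
  rw [Finset.prod_eq_single (c j)]
  · by_cases hm : (j : ℕ) < m
    · rw [dif_pos ⟨rfl, hm⟩, if_pos hm]
      unfold indf
      rfl
    · rw [dif_neg (fun h => hm h.2), if_neg hm]
  · intro e _ hne
    rw [dif_neg (fun h => hne h.1.symm)]
  · intro h
    exact absurd (mem_univ (c j)) h

lemma Qfun_nonneg (hq0 : ∀ e u, 0 ≤ q e u) (x : ∀ i, X i) : 0 ≤ Qfun pa c f q x := by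
  unfold Qfun Jfun
  refine Finset.sum_nonneg fun u _ => mul_nonneg ?_ ?_
  · exact Finset.prod_nonneg fun e _ => hq0 e (u e)
  · refine Finset.prod_nonneg fun i _ => ?_
    split <;> norm_num

lemma m2_pos (Q : (∀ i, X i) → ℝ) (hQ0 : ∀ y, 0 ≤ Q y) (hQpos : ∀ y, 0 < Q y)
    (S : Finset (Fin n)) (x : ∀ i, X i) : 0 < m2 Q S x := by
  unfold m2
  have hx : (if (∀ j ∈ S, x j = x j) then Q x else 0) = Q x := by
    rw [if_pos (fun j _ => rfl)]
  calc (0 : ℝ) < Q x := hQpos x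
    _ = (if (∀ j ∈ S, x j = x j) then Q x else 0) := hx.symm
    _ ≤ ∑ y : ∀ i, X i, if (∀ j ∈ S, y j = x j) then Q y else 0 := by
        refine Finset.single_le_sum (f := fun y => if (∀ j ∈ S, y j = x j) then Q y else 0)
          (fun y _ => ?_) (mem_univ x)
        show (0:ℝ) ≤ if (∀ j ∈ S, y j = x j) then Q y else 0
        by_cases hy : (∀ j ∈ S, y j = x j)
        · rw [if_pos hy]; exact hQ0 y
        · rw [if_neg hy]

lemma Af_nonneg (hq0 : ∀ e u, 0 ≤ q e u) (e : E) (m : ℕ) (x : ∀ i, X i) :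
    0 ≤ Af pa c f q e m x := by
  unfold Af
  refine Finset.sum_nonneg fun w _ => mul_nonneg (hq0 e w) ?_
  refine Finset.prod_nonneg fun j _ => ?_
  split
  · split <;> norm_num
  · norm_num

include hpa in
lemma Af_pos (hq0 : ∀ e u, 0 ≤ q e u) (hQpos : ∀ y, 0 < Qfun pa c f q y)
    (e : E) (m : ℕ) (x : ∀ i, X i) : 0 < Af pa c f q e m x := by
  have hGv : 0 < Gv pa c f q m x := by
    rw [← m2_pre pa c f q hpa m x]
    exact m2_pos _ (Qfun_nonneg pa c f q hq0) hQpos _ x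
  rw [Gv_factor] at hGv
  rcases lt_or_eq_of_le (Af_nonneg pa c f q hq0 e m x) with h | h
  · exact h
  · exfalso
    rw [Finset.prod_eq_zero (mem_univ e) h.symm] at hGv
    exact lt_irrefl 0 hGv

/-- Locality of `Af`: it only depends on the coordinates of children `< m` and their parents. -/
lemma Af_local (e : E) (m : ℕ) (x z : ∀ i, X i)
    (h : ∀ j : Fin n, c j = e → (j : ℕ) < m → (z j = x j ∧ ∀ p ∈ pa j, z p = x p)) :
    Af pa c f q e m z = Af pa c f q e m x := by
  unfold Af
  refine Finset.sum_congr rfl fun w _ => ?_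
  congr 1
  refine Finset.prod_congr rfl fun j _ => ?_
  by_cases hc : c j = e ∧ (j : ℕ) < m
  · rw [dif_pos hc, dif_pos hc]
    obtain ⟨hzx, hpa'⟩ := h j hc.1 hc.2
    have hres : restr (pa j) z = restr (pa j) x := by
      funext p
      exact hpa' p.1 p.2
    rw [hres, hzx]
  · rw [dif_neg hc, dif_neg hc]

/-- `Af` is constant in `m` over ranges containing no child of `e`. -/
lemma Af_const (e : E) (m m' : ℕ) (x : ∀ i, X i)
    (h : ∀ j : Fin n, c j = e → ((j : ℕ) < m ↔ (j : ℕ) < m')) :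
    Af pa c f q e m x = Af pa c f q e m' x := by
  unfold Af
  refine Finset.sum_congr rfl fun w _ => ?_
  congr 1
  refine Finset.prod_congr rfl fun j _ => ?_
  by_cases hc : c j = e
  · by_cases hm : (j : ℕ) < m
    · rw [dif_pos ⟨hc, hm⟩, dif_pos ⟨hc, (h j hc).1 hm⟩]
    · rw [dif_neg (fun hh => hm hh.2), dif_neg (fun hh => hm ((h j hc).2 hh.2))]
  · rw [dif_neg (fun hh => hc hh.1), dif_neg (fun hh => hc hh.1)]

lemma Af_zero (hq1 : ∀ e, ∑ u, q e u = 1) (e : E) (x : ∀ i, X i) :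
    Af pa c f q e 0 x = 1 := by
  unfold Af
  have : ∀ w : U e, q e w * ∏ j : Fin n,
      (if h : c j = e ∧ (j : ℕ) < 0 then
        (if f j (cast (congrArg U h.1.symm) w) (restr (pa j) x) = x j then (1 : ℝ) else 0)
      else 1) = q e w := by
    intro w
    rw [Finset.prod_eq_one (fun j _ => dif_neg (fun h => Nat.not_lt_zero _ h.2)), mul_one]
  simp only [this]
  exact hq1 e

include hpa in
/-- Marginal over `S ⊆ preF m` rewritten via truncated joints. -/
lemma m2_sub (S : Finset (Fin n)) (m : ℕ) (hS : S ⊆ preF m) (x : ∀ i, X i) :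
    m2 (Qfun pa c f q) S x = ∑ z : ∀ i, X i,
      if ((∀ j ∈ S, z j = x j) ∧ (∀ j : Fin n, ¬ ((j : ℕ) < m) → z j = x j))
      then Gv pa c f q m z else 0 := by
  have hSm : ∀ j ∈ S, (j : ℕ) < m := by
    intro j hj
    have := hS hj
    simpa [preF] using this
  have hGv : ∀ z, Gv pa c f q m z = m2 (Qfun pa c f q) (preF m) z :=
    fun z => (m2_pre pa c f q hpa m z).symm
  simp only [hGv]
  unfold m2
  have hcomb : ∀ z : ∀ i, X i,
      (if ((∀ j ∈ S, z j = x j) ∧ (∀ j : Fin n, ¬ ((j : ℕ) < m) → z j = x j))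
        then (∑ y : ∀ i, X i, if (∀ j ∈ preF m, y j = z j) then Qfun pa c f q y else 0) else 0)
      = ∑ y : ∀ i, X i,
          if (((∀ j ∈ S, z j = x j) ∧ (∀ j : Fin n, ¬ ((j : ℕ) < m) → z j = x j))
              ∧ (∀ j ∈ preF m, y j = z j))
          then Qfun pa c f q y else 0 := by
    intro z
    by_cases hz : ((∀ j ∈ S, z j = x j) ∧ (∀ j : Fin n, ¬ ((j : ℕ) < m) → z j = x j))
    · rw [if_pos hz]
      refine Finset.sum_congr rfl fun y _ => ?_
      exact if_congr ⟨fun h => ⟨hz, h⟩, fun h => h.2⟩ rfl rfl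
    · rw [if_neg hz]
      symm
      refine Finset.sum_eq_zero fun y _ => ?_
      exact if_neg (fun h => hz h.1)
  simp only [hcomb]
  rw [Finset.sum_comm]
  refine Finset.sum_congr rfl fun y _ => ?_
  -- inner sum over z collapses to the single z = ρ y
  set ρ : ∀ i, X i := fun j => if (j : ℕ) < m then y j else x j with hρ
  have hiff : ∀ z : ∀ i, X i,
      (((∀ j ∈ S, z j = x j) ∧ (∀ j : Fin n, ¬ ((j : ℕ) < m) → z j = x j))
        ∧ (∀ j ∈ preF m, y j = z j))
      ↔ (z = ρ ∧ ∀ j ∈ S, y j = x j) := by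
    intro z
    constructor
    · rintro ⟨⟨h1, h2⟩, h3⟩
      constructor
      · funext j
        by_cases hj : (j : ℕ) < m
        · rw [hρ]; simp only [if_pos hj]
          exact (h3 j (by simp [preF, hj])).symm
        · rw [hρ]; simp only [if_neg hj]
          exact h2 j hj
      · intro j hj
        rw [h3 j (by simp [preF, hSm j hj]), h1 j hj]
    · rintro ⟨rfl, hP⟩
      refine ⟨⟨fun j hj => ?_, fun j hj => ?_⟩, fun j hj => ?_⟩
      · rw [hρ]; simp only [if_pos (hSm j hj)]
        exact hP j hj
      · rw [hρ]; simp only [if_neg hj]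
      · have hjm : (j : ℕ) < m := by simpa [preF] using hj
        rw [hρ]; simp only [if_pos hjm]
  have hin : ∀ z : ∀ i, X i,
      (if (((∀ j ∈ S, z j = x j) ∧ (∀ j : Fin n, ¬ ((j : ℕ) < m) → z j = x j))
          ∧ (∀ j ∈ preF m, y j = z j))
        then Qfun pa c f q y else 0)
      = (if (z = ρ ∧ ∀ j ∈ S, y j = x j) then Qfun pa c f q y else 0) :=
    fun z => if_congr (hiff z) rfl rfl
  simp only [hin]
  by_cases hP : (∀ j ∈ S, y j = x j)
  · rw [if_pos hP]
    have : ∀ z : ∀ i, X i, (if (z = ρ ∧ ∀ j ∈ S, y j = x j) then Qfun pa c f q y else 0)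
        = (if z = ρ then Qfun pa c f q y else 0) :=
      fun z => if_congr ⟨fun h => h.1, fun h => ⟨h, hP⟩⟩ rfl rfl
    simp only [this]
    simp
  · rw [if_neg hP]
    symm
    refine Finset.sum_eq_zero fun z _ => ?_
    exact if_neg (fun h => hP h.2)

lemma ch_val_lt_iff (e : E) (a b : Fin (childSet c e).card) :
    (ch c e a : ℕ) < (ch c e b : ℕ) ↔ (a : ℕ) < (b : ℕ) := by
  rw [← Fin.lt_def, ← Fin.lt_def]
  exact ((childSet c e).orderEmbOfFin rfl).lt_iff_lt

lemma ch_val_le_iff (e : E) (a b : Fin (childSet c e).card) :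
    (ch c e a : ℕ) ≤ (ch c e b : ℕ) ↔ (a : ℕ) ≤ (b : ℕ) := by
  rw [← Fin.le_def, ← Fin.le_def]
  exact ((childSet c e).orderEmbOfFin rfl).le_iff_le

lemma ch_surj (e : E) (j : Fin n) (hj : c j = e) : ∃ l, ch c e l = j := by
  have hmem : j ∈ childSet c e := by simp [childSet, hj]
  have h2 : j ∈ Set.range ((childSet c e).orderEmbOfFin rfl) := by
    rw [Finset.range_orderEmbOfFin]
    exact hmem
  obtain ⟨l, hl⟩ := h2
  exact ⟨l, hl⟩

lemma mem_T_of_lt (e : E) (k l : Fin (childSet c e).card) (hl : (l : ℕ) < (k : ℕ)) :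
    ch c e l ∈ Tset pa c e k :=
  Finset.mem_union_left _ (Finset.mem_image.2
    ⟨l, Finset.mem_filter.2 ⟨Finset.mem_univ l, Fin.lt_def.2 hl⟩, rfl⟩)

lemma pa_subset_T (e : E) (k l : Fin (childSet c e).card) (hl : (l : ℕ) ≤ (k : ℕ)) :
    pa (ch c e l) ⊆ Tset pa c e k :=
  fun p hp => Finset.mem_union_right _
    (Finset.mem_biUnion.2 ⟨l, Finset.mem_filter.2 ⟨Finset.mem_univ l, Fin.le_def.2 hl⟩, hp⟩)

include hpa in
lemma T_lt (e : E) (k : Fin (childSet c e).card) :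
    ∀ j ∈ Tset pa c e k, (j : ℕ) < (ch c e k : ℕ) := by
  intro j hj
  rcases Finset.mem_union.1 hj with h | h
  · rcases Finset.mem_image.1 h with ⟨l, hl, rfl⟩
    exact (ch_val_lt_iff c e l k).2 (Fin.lt_def.1 (Finset.mem_filter.1 hl).2)
  · rcases Finset.mem_biUnion.1 h with ⟨l, hl, hjp⟩
    have hlk : (l : ℕ) ≤ (k : ℕ) := Fin.le_def.1 (Finset.mem_filter.1 hl).2
    have h1 : (j : ℕ) < (ch c e l : ℕ) := hpa (ch c e l) j hjp
    have h2 : (ch c e l : ℕ) ≤ (ch c e k : ℕ) := (ch_val_le_iff c e l k).2 hlk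
    omega

include hpa in
lemma keystep (hq0 : ∀ e u, 0 ≤ q e u)
    (hQpos : ∀ y, 0 < Qfun pa c f q y)
    (e : E) (k : Fin (childSet c e).card) (x : ∀ i, X i) :
    cpr (Qfun pa c f q) (ch c e k) (Tset pa c e k) (x (ch c e k)) (restr (Tset pa c e k) x)
      = Af pa c f q e ((ch c e k : ℕ) + 1) x / Af pa c f q e (ch c e k : ℕ) x := by
  set i : Fin n := ch c e k with hi
  set T : Finset (Fin n) := Tset pa c e k with hT
  have hTlt : ∀ j ∈ T, (j : ℕ) < (i : ℕ) := T_lt pa c hpa e k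
  have hT_pre : T ⊆ preF (i : ℕ) := fun j hj => by
    simp only [preF, mem_filter, mem_univ, true_and]; exact hTlt j hj
  have hiT_pre : insert i T ⊆ preF ((i : ℕ) + 1) := by
    intro j hj
    simp only [preF, mem_filter, mem_univ, true_and]
    rcases Finset.mem_insert.1 hj with rfl | hj
    · omega
    · have := hTlt j hj; omega
  rw [cpr_eq]
  have hApos := Af_pos pa c f q hpa hq0 hQpos e (i : ℕ) x
  have hm2T : 0 < m2 (Qfun pa c f q) T x :=
    m2_pos (Qfun pa c f q) (Qfun_nonneg pa c f q hq0) hQpos T x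
  have claim : m2 (Qfun pa c f q) (insert i T) x
      = (Af pa c f q e ((i : ℕ) + 1) x / Af pa c f q e (i : ℕ) x) * m2 (Qfun pa c f q) T x := by
    rw [m2_sub pa c f q hpa (insert i T) ((i : ℕ) + 1) hiT_pre x,
        m2_sub pa c f q hpa T (i : ℕ) hT_pre x, Finset.mul_sum]
    refine Finset.sum_congr rfl fun z _ => ?_
    have hC : ((∀ j ∈ insert i T, z j = x j) ∧ (∀ j : Fin n, ¬ ((j : ℕ) < (i : ℕ) + 1) → z j = x j))
        ↔ ((∀ j ∈ T, z j = x j) ∧ (∀ j : Fin n, ¬ ((j : ℕ) < (i : ℕ)) → z j = x j)) := by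
      constructor
      · rintro ⟨h1, h2⟩
        refine ⟨fun j hj => h1 j (Finset.mem_insert_of_mem hj), fun j hj => ?_⟩
        by_cases hji : (j : ℕ) = (i : ℕ)
        · rw [Fin.ext hji]
          exact h1 i (Finset.mem_insert_self _ _)
        · exact h2 j (by omega)
      · rintro ⟨h1, h2⟩
        refine ⟨fun j hj => ?_, fun j hj => h2 j (by omega)⟩
        rcases Finset.mem_insert.1 hj with hje | hj
        · rw [hje]; exact h2 i (by omega)
        · exact h1 j hj
    by_cases h : ((∀ j ∈ T, z j = x j) ∧ (∀ j : Fin n, ¬ ((j : ℕ) < (i : ℕ)) → z j = x j))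
    · rw [if_pos (hC.2 h), if_pos h]
      rw [Gv_factor, Gv_factor]
      have herase : ∀ e' ∈ univ.erase e,
          Af pa c f q e' ((i : ℕ) + 1) z = Af pa c f q e' (i : ℕ) z := by
        intro e' he'
        have hne : e' ≠ e := (Finset.mem_erase.1 he').1
        refine Af_const pa c f q e' _ _ z (fun j hcj => ?_)
        have hji : (j : ℕ) ≠ (i : ℕ) := by
          intro hh
          have hje : j = i := Fin.ext hh
          apply hne
          rw [← hcj, hje, hi]
          exact c_ch c e k
        omega
      have hz_of_T : ∀ j ∈ T, z j = x j := h.1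
      have hAf1 : Af pa c f q e ((i : ℕ) + 1) z = Af pa c f q e ((i : ℕ) + 1) x := by
        refine Af_local pa c f q e _ x z (fun j hcj hjlt => ?_)
        obtain ⟨l, rfl⟩ := ch_surj c e j hcj
        have hlk : (l : ℕ) ≤ (k : ℕ) := by
          refine (ch_val_le_iff c e l k).1 ?_
          rw [← hi]; omega
        rcases lt_or_eq_of_le hlk with hlt | heq
        · exact ⟨hz_of_T _ (mem_T_of_lt pa c e k l hlt),
            fun p hp => hz_of_T p (pa_subset_T pa c e k l hlk hp)⟩
        · have hle : l = k := Fin.ext heq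
          subst hle
          rw [← hi]
          exact ⟨h.2 i (by omega),
            fun p hp => hz_of_T p (pa_subset_T pa c e l l (le_refl _) hp)⟩
      have hAf0 : Af pa c f q e (i : ℕ) z = Af pa c f q e (i : ℕ) x := by
        refine Af_local pa c f q e _ x z (fun j hcj hjlt => ?_)
        obtain ⟨l, rfl⟩ := ch_surj c e j hcj
        have hlk : (l : ℕ) < (k : ℕ) := by
          refine (ch_val_lt_iff c e l k).1 ?_
          rw [← hi]; omega
        exact ⟨hz_of_T _ (mem_T_of_lt pa c e k l hlk),
          fun p hp => hz_of_T p (pa_subset_T pa c e k l (le_of_lt hlk) hp)⟩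
      rw [← Finset.mul_prod_erase univ _ (mem_univ e),
          ← Finset.mul_prod_erase univ (fun e' => Af pa c f q e' (i : ℕ) z) (mem_univ e)]
      rw [hAf1, hAf0]
      rw [Finset.prod_congr rfl herase]
      rw [← mul_assoc, div_mul_cancel₀ _ hApos.ne']
    · rw [if_neg (fun hh => h (hC.1 hh)), if_neg h, mul_zero]
  rw [claim, mul_div_assoc, div_self hm2T.ne', mul_one]

include hpa in
lemma telescope_Af (hq0 : ∀ e u, 0 ≤ q e u) (hq1 : ∀ e, ∑ u, q e u = 1)
    (hQpos : ∀ y, 0 < Qfun pa c f q y) (e : E) (x : ∀ i, X i) :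
    (∏ k : Fin (childSet c e).card,
      (Af pa c f q e ((ch c e k : ℕ) + 1) x / Af pa c f q e (ch c e k : ℕ) x))
    = Af pa c f q e n x := by
  set M := (childSet c e).card with hM
  set g : ℕ → ℝ := fun t => if h : t < M then Af pa c f q e (ch c e ⟨t, h⟩ : ℕ) x
    else Af pa c f q e n x with hg
  have hgpos : ∀ t, 0 < g t := by
    intro t; rw [hg]; by_cases h : t < M
    · simp only [dif_pos h]; exact Af_pos pa c f q hpa hq0 hQpos e _ x
    · simp only [dif_neg h]; exact Af_pos pa c f q hpa hq0 hQpos e _ x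
  have hgk : ∀ k : Fin M, g (k : ℕ) = Af pa c f q e (ch c e k : ℕ) x := by
    intro k; rw [hg]; simp only [dif_pos k.isLt, Fin.eta]
  have hgk1 : ∀ k : Fin M, g ((k : ℕ) + 1) = Af pa c f q e ((ch c e k : ℕ) + 1) x := by
    intro k; rw [hg]
    by_cases h : (k : ℕ) + 1 < M
    · simp only [dif_pos h]
      refine Af_const pa c f q e _ _ x (fun j hcj => ?_)
      obtain ⟨l, rfl⟩ := ch_surj c e j hcj
      have hval : ((⟨(k : ℕ) + 1, h⟩ : Fin M) : ℕ) = (k : ℕ) + 1 := rfl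
      constructor
      · intro hlt
        have h1 : (l : ℕ) < (k : ℕ) + 1 := by
          have := (ch_val_lt_iff c e l ⟨(k : ℕ) + 1, h⟩).1 hlt
          omega
        have h2 : (l : ℕ) ≤ (k : ℕ) := by omega
        have := (ch_val_le_iff c e l k).2 h2
        omega
      · intro hlt
        have h1 : (l : ℕ) ≤ (k : ℕ) := (ch_val_le_iff c e l k).1 (by omega)
        have : (l : ℕ) < (k : ℕ) + 1 := by omega
        have := (ch_val_lt_iff c e l ⟨(k : ℕ) + 1, h⟩).2 (by omega)
        omega
    · simp only [dif_neg h]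
      refine Af_const pa c f q e _ _ x (fun j hcj => ?_)
      obtain ⟨l, rfl⟩ := ch_surj c e j hcj
      have hl : (l : ℕ) ≤ (k : ℕ) := by have := l.isLt; omega
      have h1 := (ch_val_le_iff c e l k).2 hl
      have h2 := (ch c e l).isLt
      constructor
      · intro _; omega
      · intro _; omega
  have tel : ∀ T : ℕ, (∏ t ∈ Finset.range T, (g (t + 1) / g t)) = g T / g 0 := by
    intro T
    induction T with
    | zero => simp [div_self (hgpos 0).ne']
    | succ T ih =>
      rw [Finset.prod_range_succ, ih]
      have hT := (hgpos T).ne'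
      have h0 := (hgpos 0).ne'
      field_simp
  have hgM : g M = Af pa c f q e n x := by
    rw [hg]; simp only [dif_neg (lt_irrefl M)]
  have hg0 : g 0 = Af pa c f q e 0 x := by
    rw [hg]
    by_cases h : 0 < M
    · simp only [dif_pos h]
      refine Af_const pa c f q e _ _ x (fun j hcj => ?_)
      obtain ⟨l, rfl⟩ := ch_surj c e j hcj
      have hz : ((⟨0, h⟩ : Fin M) : ℕ) = 0 := rfl
      constructor
      · intro hlt
        have := (ch_val_lt_iff c e l ⟨0, h⟩).1 hlt
        omega
      · intro hlt; omega
    · simp only [dif_neg h]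
      refine Af_const pa c f q e _ _ x (fun j hcj => ?_)
      obtain ⟨l, rfl⟩ := ch_surj c e j hcj
      exact absurd l.isLt (by omega)
  calc (∏ k : Fin M,
        (Af pa c f q e ((ch c e k : ℕ) + 1) x / Af pa c f q e (ch c e k : ℕ) x))
      = ∏ k : Fin M, (g ((k : ℕ) + 1) / g (k : ℕ)) := by
        refine Finset.prod_congr rfl fun k _ => ?_
        rw [hgk k, hgk1 k]
    _ = ∏ t ∈ Finset.range M, (g (t + 1) / g t) :=
        Fin.prod_univ_eq_prod_range (fun t => g (t + 1) / g t) M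
    _ = g M / g 0 := tel M
    _ = Af pa c f q e n x / Af pa c f q e 0 x := by rw [hgM, hg0]
    _ = Af pa c f q e n x := by rw [Af_zero pa c f q hq1 e x, div_one]

end Model
/-- c-component factorization: the endogenous distribution of a
quasi-Markovian PSCM factorizes over the confounded components determined by the
exogenous variables. -/
theorem c_component_factorization
    {E : Type} [Fintype E] (X : Fin n → Type) (U : E → Type)
    [∀ i, Fintype (X i)] [∀ i, Nonempty (X i)]
    [∀ e, Fintype (U e)] [∀ e, Nonempty (U e)]
    (pa : Fin n → Finset (Fin n)) (hpa : ∀ i, ∀ j ∈ pa i, j < i)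
    (c : Fin n → E)
    (f : ∀ i, U (c i) → (∀ j : pa i, X j) → X i)
    (q : ∀ e, U e → ℝ) (hq0 : ∀ e u, 0 ≤ q e u) (hq1 : ∀ e, ∑ u, q e u = 1)
    (hQpos : ∀ x, 0 < Qfun pa c f q x) :
    ∀ x : ∀ i, X i,
      Qfun pa c f q x = ∏ e, ∏ k : Fin (childSet c e).card,
        cpr (Qfun pa c f q) (ch c e k) (Tset pa c e k)
          (x (ch c e k)) (restr (Tset pa c e k) x) := by
  intro x
  calc Qfun pa c f q x
      = Gv pa c f q n x := (Gv_top pa c f q n (le_refl n) x).symm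
    _ = ∏ e, Af pa c f q e n x := Gv_factor pa c f q n x
    _ = ∏ e, ∏ k : Fin (childSet c e).card,
        cpr (Qfun pa c f q) (ch c e k) (Tset pa c e k)
          (x (ch c e k)) (restr (Tset pa c e k) x) := by
      refine Finset.prod_congr rfl fun e _ => ?_
      rw [← telescope_Af pa c f q hpa hq0 hq1 hQpos e x]
      exact Finset.prod_congr rfl fun k _ =>
        (keystep pa c f q hpa hq0 hQpos e k x).symm
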